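/- arXiv:1508.00526 — 2 statements merged into one kernel-verified Lean document; each statement's English description precedes it below -/
import Mathlib

section
/- Suppose a group G has a normal subgroup N and quotient H = G/N, where N admits a presentation with r generators and k relations and H admits a presentation with s generators and l relations. Then G admits a presentation with r + s generators and at most k + 2rs + l relations. -/
/-- `X` admits a presentation with `n` generators and at most `m` relations. -/
def HasPresentation (X : Type*) [Group X] (n m : ℕ) : Prop :=
  ∃ rels : Finset (FreeGroup (Fin n)), rels.card ≤ m ∧
    Nonempty (PresentedGroup (rels : Set (FreeGroup (Fin n))) ≃* X)

section Aux

open Subgroup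

/-- Transport a presentation along an equivalence of generator types. -/
theorem hasPresentation_of_equiv {X : Type*} [Group X] {α : Type} {n m : ℕ}
    (e : α ≃ Fin n) (rels : Finset (FreeGroup α)) (hcard : rels.card ≤ m)
    (iso : PresentedGroup (rels : Set (FreeGroup α)) ≃* X) : HasPresentation X n m := by
  refine ⟨rels.image (FreeGroup.freeGroupCongr e), le_trans Finset.card_image_le hcard, ?_⟩
  have h : ((rels.image (FreeGroup.freeGroupCongr e) : Finset (FreeGroup (Fin n))) :
      Set (FreeGroup (Fin n))) = (FreeGroup.freeGroupCongr e) '' (rels : Set (FreeGroup α)) := by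
    simp [Finset.coe_image]
  rw [h]
  exact ⟨((PresentedGroup.equivPresentedGroup (rels : Set (FreeGroup α)) e).symm).trans iso⟩

/-- If conjugation by `q` sends the images of generators into the range of `ψ`,
then it sends the whole range into the range. -/
theorem conj_range_mem {β : Type*} {Q : Type*} [Group Q] (ψ : FreeGroup β →* Q) (q : Q)
    (h : ∀ b, q * ψ (FreeGroup.of b) * q⁻¹ ∈ ψ.range) :
    ∀ m ∈ ψ.range, q * m * q⁻¹ ∈ ψ.range := by
  rintro m ⟨w, rfl⟩
  induction w using FreeGroup.induction_on with
  | C1 => simpa using ψ.range.one_mem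
  | of b => exact h b
  | inv_of b hb => simpa [mul_assoc] using ψ.range.inv_mem (h b)
  | mul x y hx hy =>
      have : q * ψ (x * y) * q⁻¹ = (q * ψ x * q⁻¹) * (q * ψ y * q⁻¹) := by
        rw [map_mul]; group
      rw [this]
      exact ψ.range.mul_mem hx hy

end Aux

/-- P. Hall's lemma: if `N ⊴ G` has a presentation with `r` generators and `k`
relations and `G/N` has a presentation with `s` generators and `l` relations,
then `G` has a presentation with `r + s` generators and at most `k + 2rs + l`
relations. -/
theorem hall_extension_presentation (G : Type*) [Group G]
    (N : Subgroup G) [N.Normal] (r k s l : ℕ)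
    (hN : HasPresentation N r k) (hH : HasPresentation (G ⧸ N) s l) :
    HasPresentation G (r + s) (k + 2 * r * s + l) := by
  classical
  obtain ⟨relsN, hkN, ⟨φN⟩⟩ := hN
  obtain ⟨relsH, hlH, ⟨φH⟩⟩ := hH
  -- the maps from the free groups onto `N` and `G/N`
  set νN : FreeGroup (Fin r) →* G :=
    N.subtype.comp (φN.toMonoidHom.comp (PresentedGroup.mk (relsN : Set (FreeGroup (Fin r)))))
    with hνN_def
  set νH : FreeGroup (Fin s) →* G ⧸ N :=
    φH.toMonoidHom.comp (PresentedGroup.mk (relsH : Set (FreeGroup (Fin s)))) with hνH_def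
  have hνN_mem : ∀ w, νN w ∈ N := fun w => (φN _).2
  have hνN_surj : ∀ x ∈ N, ∃ w, νN w = x := by
    intro x hx
    obtain ⟨p, hp⟩ := φN.surjective ⟨x, hx⟩
    obtain ⟨w, hw⟩ := PresentedGroup.mk_surjective (relsN : Set (FreeGroup (Fin r))) p
    exact ⟨w, by simp [hνN_def, hw, hp]⟩
  have hνN_ker : ∀ w, νN w = 1 ↔ w ∈ Subgroup.normalClosure (relsN : Set (FreeGroup (Fin r))) := by
    intro w
    constructor
    · intro h
      have h1 : ((φN ((PresentedGroup.mk (relsN : Set (FreeGroup (Fin r)))) w) : N) : G) = 1 := h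
      have h2 : φN ((PresentedGroup.mk (relsN : Set (FreeGroup (Fin r)))) w) = 1 := by
        exact_mod_cast h1
      have h3 : (PresentedGroup.mk (relsN : Set (FreeGroup (Fin r)))) w = 1 := by
        have := congrArg φN.symm h2
        simpa using this
      exact (QuotientGroup.eq_one_iff w).1 h3
    · intro h
      have h3 : (PresentedGroup.mk (relsN : Set (FreeGroup (Fin r)))) w = 1 :=
        (QuotientGroup.eq_one_iff w).2 h
      show ((φN ((PresentedGroup.mk (relsN : Set (FreeGroup (Fin r)))) w) : N) : G) = 1
      rw [h3, map_one]
      rfl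
  have hνH_surj : Function.Surjective νH :=
    φH.surjective.comp (PresentedGroup.mk_surjective _)
  have hνH_ker : ∀ w, νH w = 1 ↔ w ∈ Subgroup.normalClosure (relsH : Set (FreeGroup (Fin s))) := by
    intro w
    constructor
    · intro h
      have h2 : φH ((PresentedGroup.mk (relsH : Set (FreeGroup (Fin s)))) w) = 1 := h
      have h3 : (PresentedGroup.mk (relsH : Set (FreeGroup (Fin s)))) w = 1 := by
        have := congrArg φH.symm h2
        simpa using this
      exact (QuotientGroup.eq_one_iff w).1 h3
    · intro h
      have h3 : (PresentedGroup.mk (relsH : Set (FreeGroup (Fin s)))) w = 1 :=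
        (QuotientGroup.eq_one_iff w).2 h
      show φH ((PresentedGroup.mk (relsH : Set (FreeGroup (Fin s)))) w) = 1
      rw [h3, map_one]
  -- lifts of the generators of `G/N`
  choose g hg using fun j : Fin s => QuotientGroup.mk_surjective (νH (FreeGroup.of j))
  -- generators of the presentation of `G`
  set α := (Fin r ⊕ Fin s) with hα
  set gen : α → G := Sum.elim (fun i => νN (FreeGroup.of i)) g with hgen
  set f : FreeGroup α →* G := FreeGroup.lift gen with hf
  set ιL : FreeGroup (Fin r) →* FreeGroup α := FreeGroup.map Sum.inl with hιL
  set ιR : FreeGroup (Fin s) →* FreeGroup α := FreeGroup.map Sum.inr with hιR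
  have hfL : ∀ w, f (ιL w) = νN w := by
    intro w
    have : f.comp ιL = νN := FreeGroup.ext_hom _ _ (fun i => by
      simp [hf, hιL, hgen])
    rw [← this]; rfl
  have hfR : ∀ w, QuotientGroup.mk (f (ιR w)) = νH w := by
    intro w
    have : ((QuotientGroup.mk' N).comp f).comp ιR = νH := FreeGroup.ext_hom _ _ (fun j => by
      simp [hf, hιR, hgen, hg])
    rw [← this]; rfl
  have hιLof : ∀ i : Fin r, ιL (FreeGroup.of i) = FreeGroup.of (Sum.inl i) := fun i =>
    FreeGroup.map.of
  -- choose words expressing conjugates of the `n` generators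
  have hconj : ∀ (i : Fin r) (j : Fin s),
      g j * νN (FreeGroup.of i) * (g j)⁻¹ ∈ N :=
    fun i j => Subgroup.Normal.conj_mem ‹N.Normal› _ (hνN_mem _) _
  have hconj' : ∀ (i : Fin r) (j : Fin s),
      (g j)⁻¹ * νN (FreeGroup.of i) * g j ∈ N := by
    intro i j
    have := Subgroup.Normal.conj_mem ‹N.Normal› _ (hνN_mem (FreeGroup.of i)) (g j)⁻¹
    simpa using this
  choose u hu using fun (p : Fin r × Fin s) => hνN_surj _ (hconj p.1 p.2)
  choose u' hu' using fun (p : Fin r × Fin s) => hνN_surj _ (hconj' p.1 p.2)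
  -- choose words for the lifted relations of `H`
  have hWmem : ∀ W ∈ relsH, f (ιR W) ∈ N := by
    intro W hW
    rw [← QuotientGroup.eq_one_iff, hfR]
    exact (hνH_ker W).2 (Subgroup.subset_normalClosure hW)
  set v : FreeGroup (Fin s) → FreeGroup (Fin r) := fun W =>
    if h : f (ιR W) ∈ N then (hνN_surj _ h).choose else 1 with hv
  have hvspec : ∀ W ∈ relsH, νN (v W) = f (ιR W) := by
    intro W hW
    rw [hv]
    simp only [dif_pos (hWmem W hW)]
    exact (hνN_surj _ (hWmem W hW)).choose_spec
  -- the relation words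
  set c₁ : Fin r × Fin s → FreeGroup α := fun p =>
    FreeGroup.of (Sum.inr p.2) * FreeGroup.of (Sum.inl p.1) * (FreeGroup.of (Sum.inr p.2))⁻¹ *
      (ιL (u p))⁻¹ with hc₁
  set c₂ : Fin r × Fin s → FreeGroup α := fun p =>
    (FreeGroup.of (Sum.inr p.2))⁻¹ * FreeGroup.of (Sum.inl p.1) * FreeGroup.of (Sum.inr p.2) *
      (ιL (u' p))⁻¹ with hc₂
  set d : FreeGroup (Fin s) → FreeGroup α := fun W => ιR W * (ιL (v W))⁻¹ with hd
  set rels : Finset (FreeGroup α) :=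
    relsN.image ιL ∪ Finset.image c₁ Finset.univ ∪ Finset.image c₂ Finset.univ ∪
      relsH.image d with hrels
  -- cardinality bound
  have hcard : rels.card ≤ k + 2 * r * s + l := by
    have h1 : (relsN.image ιL).card ≤ k := le_trans Finset.card_image_le hkN
    have h2 : (Finset.image c₁ (Finset.univ : Finset (Fin r × Fin s))).card ≤ r * s := by
      refine le_trans Finset.card_image_le ?_
      simp
    have h3 : (Finset.image c₂ (Finset.univ : Finset (Fin r × Fin s))).card ≤ r * s := by
      refine le_trans Finset.card_image_le ?_
      simp
    have h4 : (relsH.image d).card ≤ l := le_trans Finset.card_image_le hlH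
    calc rels.card ≤ (relsN.image ιL ∪ Finset.image c₁ Finset.univ ∪
            Finset.image c₂ Finset.univ).card + (relsH.image d).card :=
          Finset.card_union_le _ _
      _ ≤ ((relsN.image ιL ∪ Finset.image c₁ Finset.univ).card +
            (Finset.image c₂ Finset.univ).card) + (relsH.image d).card := by
          gcongr; exact Finset.card_union_le _ _
      _ ≤ (((relsN.image ιL).card + (Finset.image c₁ Finset.univ).card) +
            (Finset.image c₂ Finset.univ).card) + (relsH.image d).card := by
          gcongr; exact Finset.card_union_le _ _
      _ ≤ ((k + r * s) + r * s) + l := by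
          exact add_le_add (add_le_add (add_le_add h1 h2) h3) h4
      _ = k + 2 * r * s + l := by ring
  -- the map to `G` kills all relations
  have hkill : ∀ w ∈ (rels : Set (FreeGroup α)), FreeGroup.lift gen w = 1 := by
    intro w hw
    rw [← hf]
    simp only [hrels, Finset.coe_union, Set.mem_union, Finset.coe_image, Set.mem_image,
      Finset.mem_coe] at hw
    rcases hw with (((⟨R, hR, rfl⟩ | ⟨p, _, rfl⟩) | ⟨p, _, rfl⟩) | ⟨W, hW, rfl⟩)
    · rw [hfL]
      exact (hνN_ker R).2 (Subgroup.subset_normalClosure hR)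
    · simp only [hc₁, map_mul, map_inv, hfL]
      have h1 : f (FreeGroup.of (Sum.inr p.2)) = g p.2 := by simp [hf, hgen]
      have h2 : f (FreeGroup.of (Sum.inl p.1)) = νN (FreeGroup.of p.1) := by simp [hf, hgen]
      rw [h1, h2, hu p, mul_inv_eq_one]
    · simp only [hc₂, map_mul, map_inv, hfL]
      have h1 : f (FreeGroup.of (Sum.inr p.2)) = g p.2 := by simp [hf, hgen]
      have h2 : f (FreeGroup.of (Sum.inl p.1)) = νN (FreeGroup.of p.1) := by simp [hf, hgen]
      rw [h1, h2, hu' p, mul_inv_eq_one]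
    · simp only [hd, map_mul, map_inv, hfL]
      rw [hvspec W hW, mul_inv_eq_one]
  -- the homomorphism from the presented group
  set π : FreeGroup α →* PresentedGroup ((rels : Finset (FreeGroup α)) : Set (FreeGroup α)) :=
    PresentedGroup.mk _ with hπ
  set toG := PresentedGroup.toGroup hkill with htoG
  have hfactor : ∀ x, toG (π x) = f x := fun x => rfl
  have hπrel : ∀ w ∈ rels, π w = 1 := by
    intro w hw
    rw [hπ]
    exact (QuotientGroup.eq_one_iff _).2 (Subgroup.subset_normalClosure hw)
  -- the subgroups generated by the images of the two families of generators
  set M : Subgroup (PresentedGroup ((rels : Finset (FreeGroup α)) : Set (FreeGroup α))) :=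
    (π.comp ιL).range with hM
  set B : Subgroup (PresentedGroup ((rels : Finset (FreeGroup α)) : Set (FreeGroup α))) :=
    (π.comp ιR).range with hB
  -- conjugation relations: conjugates of `M`-generators lie in `M`
  have hgen_mem : ∀ a : α, (PresentedGroup.of a :
      PresentedGroup ((rels : Finset (FreeGroup α)) : Set (FreeGroup α))) = π (FreeGroup.of a) :=
    fun a => rfl
  have hc₁mem : ∀ p : Fin r × Fin s, p ∈ (Finset.univ : Finset (Fin r × Fin s)) → c₁ p ∈ rels := by
    intro p hp
    rw [hrels]
    exact Finset.mem_union_left _ (Finset.mem_union_left _ (Finset.mem_union_right _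
      (Finset.mem_image_of_mem c₁ hp)))
  have hc₂mem : ∀ p : Fin r × Fin s, p ∈ (Finset.univ : Finset (Fin r × Fin s)) → c₂ p ∈ rels := by
    intro p hp
    rw [hrels]
    exact Finset.mem_union_left _ (Finset.mem_union_right _ (Finset.mem_image_of_mem c₂ hp))
  have hconjM : ∀ (j : Fin s) (i : Fin r),
      π (FreeGroup.of (Sum.inr j)) * π (FreeGroup.of (Sum.inl i)) *
        (π (FreeGroup.of (Sum.inr j)))⁻¹ ∈ M := by
    intro j i
    have h := hπrel _ (hc₁mem (i, j) (Finset.mem_univ _))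
    simp only [hc₁, map_mul, map_inv, mul_inv_eq_one] at h
    rw [hM]
    refine ⟨u (i, j), ?_⟩
    simp only [MonoidHom.comp_apply]
    exact h.symm
  have hconjM' : ∀ (j : Fin s) (i : Fin r),
      (π (FreeGroup.of (Sum.inr j)))⁻¹ * π (FreeGroup.of (Sum.inl i)) *
        π (FreeGroup.of (Sum.inr j)) ∈ M := by
    intro j i
    have h := hπrel _ (hc₂mem (i, j) (Finset.mem_univ _))
    simp only [hc₂, map_mul, map_inv, mul_inv_eq_one] at h
    rw [hM]
    refine ⟨u' (i, j), ?_⟩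
    simp only [MonoidHom.comp_apply]
    exact h.symm
  -- `M` is normal
  have hMnormal : M.Normal := by
    rw [← Subgroup.normalizer_eq_top_iff]
    rw [eq_top_iff]
    intro q _
    refine PresentedGroup.generated_by _ (Subgroup.normalizer (M : Set _)) ?_ q
    intro a
    cases a with
    | inl i =>
        exact Subgroup.le_normalizer ⟨FreeGroup.of i, rfl⟩
    | inr j =>
        show π (FreeGroup.of (Sum.inr j)) ∈ (Subgroup.normalizer (M : Set _))
        rw [Subgroup.mem_normalizer_iff]
        intro h
        constructor
        · intro hh
          exact conj_range_mem (π.comp ιL) (π (FreeGroup.of (Sum.inr j)))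
            (fun i => by simpa only [MonoidHom.comp_apply, hιLof] using hconjM j i) h hh
        · intro hh
          have := conj_range_mem (π.comp ιL) (π (FreeGroup.of (Sum.inr j)))⁻¹
            (fun i => by
              simpa only [MonoidHom.comp_apply, hιLof, inv_inv] using hconjM' j i) _ hh
          simpa [mul_assoc, hM] using this
  -- every element decomposes as (word in g's)·(word in n's)
  have hsup : B ⊔ M = ⊤ := by
    rw [eq_top_iff]
    intro q _
    refine PresentedGroup.generated_by _ (B ⊔ M) ?_ q
    intro a
    cases a with
    | inl i => exact Subgroup.mem_sup_right ⟨FreeGroup.of i, rfl⟩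
    | inr j => exact Subgroup.mem_sup_left ⟨FreeGroup.of j, rfl⟩
  have hdecomp : ∀ q : PresentedGroup ((rels : Finset (FreeGroup α)) : Set (FreeGroup α)),
      ∃ (w₁ : FreeGroup (Fin s)) (w₂ : FreeGroup (Fin r)), q = π (ιR w₁) * π (ιL w₂) := by
    intro q
    have hq : q ∈ ((B ⊔ M : Subgroup _) : Set _) := by rw [hsup]; trivial
    rw [Subgroup.mul_normal B M] at hq
    obtain ⟨b, hb, m, hm, hbm⟩ := hq
    obtain ⟨w₁, hw₁⟩ := hb
    obtain ⟨w₂, hw₂⟩ := hm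
    refine ⟨w₁, w₂, ?_⟩
    rw [← hbm, ← hw₁, ← hw₂]
    rfl
  -- lifted relations of `H` land in `M`
  have hHrelM : ∀ w₁ ∈ Subgroup.normalClosure (relsH : Set (FreeGroup (Fin s))),
      π (ιR w₁) ∈ M := by
    have hcomap : ((M.comap (π.comp ιR))).Normal := Subgroup.Normal.comap hMnormal _
    have hsub : (relsH : Set (FreeGroup (Fin s))) ⊆ M.comap (π.comp ιR) := by
      intro W hW
      have hWrels : d W ∈ rels := by
        rw [hrels]
        exact Finset.mem_union_right _ (Finset.mem_image_of_mem d hW)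
      have h := hπrel _ hWrels
      simp only [hd, map_mul, map_inv, mul_inv_eq_one] at h
      exact ⟨v W, h.symm⟩
    intro w₁ hw₁
    exact Subgroup.normalClosure_le_normal hsub hw₁
  -- relations of `N` die in the presented group
  have hNrelkill : ∀ w ∈ Subgroup.normalClosure (relsN : Set (FreeGroup (Fin r))),
      π (ιL w) = 1 := by
    have hsub : (relsN : Set (FreeGroup (Fin r))) ⊆ (π.comp ιL).ker := by
      intro R hR
      have hRrels : ιL R ∈ rels := by
        rw [hrels]
        exact Finset.mem_union_left _ (Finset.mem_union_left _ (Finset.mem_union_left _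
          (Finset.mem_image_of_mem ιL hR)))
      exact hπrel _ hRrels
    intro w hw
    exact Subgroup.normalClosure_le_normal hsub hw
  -- injectivity
  have hinj : Function.Injective toG := by
    rw [injective_iff_map_eq_one]
    intro q hq
    obtain ⟨w₁, w₂, rfl⟩ := hdecomp q
    have h1 : f (ιR w₁) * νN w₂ = 1 := by
      have h0 : toG (π (ιR w₁) * π (ιL w₂)) = f (ιR w₁) * νN w₂ := by
        rw [map_mul, hfactor, hfactor, hfL]
      rw [← h0]
      exact hq
    have h2 : νH w₁ = 1 := by
      have := congrArg (QuotientGroup.mk' N) h1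
      simp only [map_mul, map_one] at this
      rw [QuotientGroup.mk'_apply, QuotientGroup.mk'_apply] at this
      rw [hfR] at this
      have hN2 : (QuotientGroup.mk (νN w₂) : G ⧸ N) = 1 :=
        (QuotientGroup.eq_one_iff _).2 (hνN_mem w₂)
      rw [hN2, mul_one] at this
      exact this
    obtain ⟨w₃, hw₃⟩ := hHrelM w₁ ((hνH_ker w₁).1 h2)
    simp only [MonoidHom.comp_apply] at hw₃
    have hfw : νN w₃ = f (ιR w₁) := by
      have h5 := congrArg toG hw₃
      rw [hfactor, hfactor, hfL] at h5
      exact h5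
    have h3 : νN (w₃ * w₂) = 1 := by
      rw [map_mul, hfw]
      exact h1
    rw [← hw₃, ← map_mul, ← map_mul]
    exact hNrelkill _ ((hνN_ker _).1 h3)
  -- surjectivity
  have hsurj : Function.Surjective toG := by
    intro x
    obtain ⟨w₁, hw₁⟩ := hνH_surj (QuotientGroup.mk x)
    have hmem : (f (ιR w₁))⁻¹ * x ∈ N := by
      apply QuotientGroup.eq.mp
      rw [hfR, hw₁]
    obtain ⟨w₂, hw₂⟩ := hνN_surj _ hmem
    refine ⟨π (ιR w₁ * ιL w₂), ?_⟩
    rw [hfactor, map_mul, hfL, hw₂]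
    group
  exact hasPresentation_of_equiv finSumFinEquiv rels hcard
    (MulEquiv.ofBijective toG ⟨hinj, hsurj⟩)
end

section
/- Let H be a non-abelian finite p-group whose center Z(H) is elementary abelian and satisfies Z(H) ∩ Φ(H) ≠ 1, where Φ(H) is the Frattini subgroup. Then d(H) < d(Z(H)) + d(H/Z(H)). -/
open Subgroup
open scoped commutatorElement

section Aux

variable {p : ℕ} [Fact p.Prime] {H : Type*} [Group H] [Finite H]

/-- In a finite `p`-group, every maximal subgroup contains commutators and `p`-th powers. -/
lemma phi_le_coatom (hH : IsPGroup p H) {M : Subgroup H} (hM : IsCoatom M) :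
    commutator H ⊔ Subgroup.closure {x : H | ∃ h : H, x = h ^ p} ≤ M := by
  have hp := (Fact.out : p.Prime)
  have hnil : Group.IsNilpotent H := hH.isNilpotent
  have hnc : NormalizerCondition H := normalizerCondition_of_isNilpotent
  haveI hMn : M.Normal := Subgroup.NormalizerCondition.normal_of_coatom M hnc hM
  set f := QuotientGroup.mk' M with hf
  -- every subgroup of the quotient is ⊥ or ⊤
  have hsub : ∀ K : Subgroup (H ⧸ M), K = ⊥ ∨ K = ⊤ := by
    intro K
    have hinj : Function.Injective (Subgroup.comap f) :=
      Subgroup.comap_injective (QuotientGroup.mk'_surjective M)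
    have hMle : M ≤ Subgroup.comap f K := by
      intro x hx
      have h1 : f x = 1 := (QuotientGroup.eq_one_iff x).mpr hx
      rw [Subgroup.mem_comap, h1]
      exact K.one_mem
    rcases hMle.lt_or_eq with hlt | heq
    · right
      have := hM.2 _ hlt
      apply hinj
      rw [this, Subgroup.comap_top]
    · left
      apply hinj
      rw [← heq, MonoidHom.comap_bot, QuotientGroup.ker_mk']
  -- the quotient is nontrivial
  obtain ⟨u, hu⟩ : ∃ u : H, u ∉ M := by
    by_contra h
    push_neg at h
    exact hM.1 ((Subgroup.eq_top_iff' M).mpr h)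
  set x : H ⧸ M := f u with hx
  have hx1 : x ≠ 1 := by
    simpa [hx, f, QuotientGroup.eq_one_iff] using hu
  -- the quotient is cyclic generated by x
  have hzp : Subgroup.zpowers x = ⊤ := by
    rcases hsub (Subgroup.zpowers x) with h | h
    · exact absurd (Subgroup.zpowers_eq_bot.mp h) hx1
    · exact h
  have hQ : IsPGroup p (H ⧸ M) := hH.to_quotient M
  -- p divides the order of x
  have hpord : (p : ℕ) ∣ orderOf x := by
    obtain ⟨k, hk⟩ := hQ x
    have hdvd : orderOf x ∣ p ^ k := orderOf_dvd_of_pow_eq_one hk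
    obtain ⟨j, hj, hje⟩ := (Nat.dvd_prime_pow hp).mp hdvd
    rcases Nat.eq_zero_or_pos j with rfl | hjpos
    · simp at hje
      exact absurd hje hx1
    · rw [hje]
      exact dvd_pow_self p hjpos.ne'
  -- x has order exactly p
  have hxp : x ^ p = 1 := by
    rcases hsub (Subgroup.zpowers (x ^ p)) with h | h
    · simpa using Subgroup.zpowers_eq_bot.mp h
    · exfalso
      have hxmem : x ∈ Subgroup.zpowers (x ^ p) := by rw [h]; trivial
      obtain ⟨m, hm⟩ := Subgroup.mem_zpowers_iff.mp hxmem
      have : x ^ ((p : ℤ) * m - 1) = 1 := by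
        rw [zpow_sub, zpow_mul, zpow_natCast, zpow_one]
        rw [hm]
        simp
      have hdvd : (orderOf x : ℤ) ∣ (p : ℤ) * m - 1 := orderOf_dvd_iff_zpow_eq_one.mpr this
      have hpz : (p : ℤ) ∣ (p : ℤ) * m - 1 :=
        dvd_trans (Int.natCast_dvd_natCast.mpr hpord) hdvd
      have : (p : ℤ) ∣ 1 := (dvd_sub_right ⟨m, rfl⟩).mp hpz
      have h1 := Int.le_of_dvd one_pos this
      have h2 := hp.two_le
      omega
  -- every element of the quotient has p-th power 1
  have hpow : ∀ q : H ⧸ M, q ^ p = 1 := by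
    intro q
    have : q ∈ Subgroup.zpowers x := by rw [hzp]; trivial
    obtain ⟨n, hn⟩ := Subgroup.mem_zpowers_iff.mp this
    rw [← hn, ← zpow_natCast, ← zpow_mul, mul_comm, zpow_mul, zpow_natCast, hxp, one_zpow]
  -- the quotient is commutative
  have hcomm : ∀ a b : H ⧸ M, a * b = b * a := by
    intro a b
    have ha : a ∈ Subgroup.zpowers x := by rw [hzp]; trivial
    have hb : b ∈ Subgroup.zpowers x := by rw [hzp]; trivial
    obtain ⟨m, hm⟩ := Subgroup.mem_zpowers_iff.mp ha
    obtain ⟨n, hn⟩ := Subgroup.mem_zpowers_iff.mp hb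
    rw [← hm, ← hn]
    exact ((Commute.refl x).zpow_zpow m n).eq
  apply sup_le
  · rw [_root_.commutator_def]
    rw [Subgroup.commutator_le]
    intro g _ h _
    have h1 : f (⁅g, h⁆) = 1 := by
      rw [commutatorElement_def]
      simp only [map_mul, map_inv]
      rw [hcomm (f g) (f h)]
      group
    exact (QuotientGroup.eq_one_iff _).mp h1
  · rw [Subgroup.closure_le]
    rintro _ ⟨h, rfl⟩
    rw [SetLike.mem_coe]
    have h1 : f (h ^ p) = 1 := by rw [map_pow]; exact hpow (f h)
    exact (QuotientGroup.eq_one_iff _).mp h1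

/-- Frattini-type nongeneration for finite `p`-groups. -/
lemma eq_top_of_sup_phi (hH : IsPGroup p H) {K : Subgroup H}
    (h : K ⊔ (commutator H ⊔ Subgroup.closure {x : H | ∃ h : H, x = h ^ p}) = ⊤) :
    K = ⊤ := by
  have hle : commutator H ⊔ Subgroup.closure {x : H | ∃ h : H, x = h ^ p} ≤ frattini H := by
    apply le_iInf₂
    intro M hM
    exact phi_le_coatom hH hM
  apply frattini_nongenerating
  rw [eq_top_iff, ← h]
  exact sup_le_sup_left hle K

/-- the closure–span correspondence for `ZMod n`-modules -/
lemma addclosure_eq_span {n : ℕ} {V : Type*} [AddCommGroup V] [Module (ZMod n) V] (s : Set V) :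
    (Submodule.span (ZMod n) s : Set V) = (AddSubgroup.closure s : Set V) := by
  apply le_antisymm
  · intro x hx
    induction hx using Submodule.span_induction with
    | mem y hy => exact AddSubgroup.subset_closure hy
    | zero => exact (AddSubgroup.closure s).zero_mem
    | add y z _ _ hy hz => exact (AddSubgroup.closure s).add_mem hy hz
    | smul c y _ hy => exact ZMod.smul_mem hy c
  · have h2 := (AddSubgroup.closure_le
        (Submodule.span (ZMod n) s).toAddSubgroup).mpr Submodule.subset_span
    exact fun x hx => h2 hx

/-- In a finite elementary abelian `p`-group, any nontrivial element can be completed to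
a minimal generating set. -/
lemma exists_small_gen {A : Type*} [CommGroup A] [Finite A]
    (h : ∀ a : A, a ^ p = 1) {z : A} (hz : z ≠ 1) :
    ∃ T : Finset A, T.card + 1 ≤ Group.rank A ∧
      Subgroup.closure ((T : Set A) ∪ {z}) = ⊤ := by
  classical
  have hp := (Fact.out : p.Prime)
  haveI : NeZero p := ⟨hp.ne_zero⟩
  haveI : Module (ZMod p) (Additive A) :=
    AddCommGroup.zmodModule (n := p) (by
      intro x
      show p • x = 0
      exact h (Additive.toMul x))
  -- the subgroup closure in A corresponds to the span in Additive A
  have key : ∀ s : Set A, Subgroup.closure s = ⊤ ↔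
      Submodule.span (ZMod p) (Additive.ofMul '' s) = ⊤ := by
    intro s
    have h1 : Subgroup.toAddSubgroup (Subgroup.closure s) =
        AddSubgroup.closure (Additive.ofMul '' s) := by
      apply le_antisymm
      · have hle : Subgroup.closure s ≤
            Subgroup.toAddSubgroup.symm (AddSubgroup.closure (Additive.ofMul '' s)) := by
          rw [Subgroup.closure_le]
          intro y hy
          have h2 : Additive.ofMul y ∈ AddSubgroup.closure (Additive.ofMul '' s) :=
            AddSubgroup.subset_closure (Set.mem_image_of_mem _ hy)
          exact h2
        exact fun x hx => hle hx
      · rw [AddSubgroup.closure_le]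
        intro w hw
        obtain ⟨y, hy, hyw⟩ := hw
        have h3 : y ∈ Subgroup.closure s := Subgroup.subset_closure hy
        rw [← hyw]
        exact h3
    have hmem : ∀ x, x ∈ Submodule.span (ZMod p) (Additive.ofMul '' s) ↔
        x ∈ AddSubgroup.closure (Additive.ofMul '' s) := fun x => by
      rw [← SetLike.mem_coe, addclosure_eq_span, SetLike.mem_coe]
    constructor
    · intro hs
      refine Submodule.eq_top_iff'.mpr fun x => ?_
      rw [hmem, ← h1]
      show Additive.toMul x ∈ Subgroup.closure s
      rw [hs]; trivial
    · intro hs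
      refine (Subgroup.eq_top_iff' _).mpr fun y => ?_
      have hy : Additive.ofMul y ∈ AddSubgroup.closure (Additive.ofMul '' s) := by
        rw [← hmem, hs]; trivial
      rw [← h1] at hy
      exact hy
  -- basis extension
  have hz0 : (Additive.ofMul z : Additive A) ≠ 0 := hz
  have hli : LinearIndependent (ZMod p)
      (fun x => (x : Additive A) : ({Additive.ofMul z} : Set (Additive A)) → Additive A) :=
    by exact LinearIndepOn.singleton (R := ZMod p) (v := id) hz0
  set b := LinearIndepOn.extend (v := id) hli (Set.subset_univ _) with hb
  have hzb : Additive.ofMul z ∈ b := LinearIndepOn.subset_extend (v := id) hli _ rfl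
  let B : Module.Basis b (ZMod p) (Additive A) := Module.Basis.extend hli
  haveI : Fintype b := (Set.toFinite b).fintype
  have hcard : b.toFinset.card = Module.finrank (ZMod p) (Additive A) := by
    rw [Module.finrank_eq_card_basis B, Set.toFinset_card]
  have hspan : Submodule.span (ZMod p) b = ⊤ := by
    have := B.span_eq
    rwa [(Module.Basis.coe_extend hli : ⇑B = _), Subtype.range_coe] at this
  -- the generating set
  set T : Finset A := (b.toFinset.image (fun v => Additive.toMul v)).erase z with hT
  have hzi : z ∈ b.toFinset.image (fun v => Additive.toMul v) := by
    refine Finset.mem_image.mpr ⟨Additive.ofMul z, ?_, rfl⟩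
    rwa [Set.mem_toFinset]
  have hins : insert z T = b.toFinset.image (fun v => Additive.toMul v) :=
    Finset.insert_erase hzi
  have himgcard : (b.toFinset.image (fun v => Additive.toMul v)).card = b.toFinset.card :=
    Finset.card_image_of_injective _ (fun x y hxy => hxy)
  -- closure of T ∪ {z} is everything
  have hclos : Subgroup.closure ((T : Set A) ∪ {z}) = ⊤ := by
    have hset : (T : Set A) ∪ {z} = ((insert z T : Finset A) : Set A) := by
      rw [Finset.coe_insert, Set.insert_eq, Set.union_comm]
    rw [hset, key]
    have himg : Additive.ofMul '' ((insert z T : Finset A) : Set A) = b := by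
      rw [hins]
      rw [Finset.coe_image, Set.coe_toFinset, ← Set.image_comp]
      exact Set.image_id b
    rw [himg, hspan]
  -- the rank bound
  obtain ⟨S, hScard, hStop⟩ := Group.rank_spec A
  have hfinrank : Module.finrank (ZMod p) (Additive A) ≤ Group.rank A := by
    have hsp : Submodule.span (ZMod p) (Additive.ofMul '' (S : Set A)) = ⊤ :=
      (key _).mp hStop
    set S' : Finset (Additive A) := S.image (fun a => Additive.ofMul a) with hS'
    have hcoe : (S' : Set (Additive A)) = Additive.ofMul '' (S : Set A) := by
      rw [hS', Finset.coe_image]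
    have h2 : Module.finrank (ZMod p)
        (Submodule.span (ZMod p) ((S' : Set (Additive A)))) ≤ S'.card :=
      finrank_span_finset_le_card S'
    rw [hcoe, hsp] at h2
    rw [finrank_top] at h2
    calc Module.finrank (ZMod p) (Additive A) ≤ S'.card := h2
      _ ≤ S.card := Finset.card_image_le
      _ = Group.rank A := hScard
  refine ⟨T, ?_, hclos⟩
  have hTcard : T.card + 1 = b.toFinset.card := by
    have hnm : z ∉ T := by rw [hT]; exact Finset.notMem_erase z _
    have := Finset.card_insert_of_notMem hnm
    rw [hins] at this
    omega
  omega

end Aux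

/-- A non-abelian finite `p`-group `H` with elementary abelian centre meeting
the Frattini subgroup nontrivially satisfies `d(H) < d(Z(H)) + d(H/Z(H))`. -/
theorem rank_lt_of_center_meets_frattini
    (p : ℕ) [Fact p.Prime] (H : Type*) [Group H] [Finite H] (hH : IsPGroup p H)
    (hnonab : ∃ x y : H, x * y ≠ y * x)
    (helem : ∀ x ∈ Subgroup.center H, x ^ p = 1)
    (Φ : Subgroup H)
    (hΦ : Φ = commutator H ⊔ Subgroup.closure {x : H | ∃ h : H, x = h ^ p})
    (hmeet : Subgroup.center H ⊓ Φ ≠ ⊥) :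
    Group.rank H < Group.rank (Subgroup.center H) + Group.rank (H ⧸ Subgroup.center H) := by
  classical
  set Z := Subgroup.center H with hZdef
  obtain ⟨⟨z, hzmem⟩, hzne⟩ := Subgroup.ne_bot_iff_exists_ne_one.mp hmeet
  have hzZ : z ∈ Z := hzmem.1
  have hzΦ : z ∈ Φ := hzmem.2
  have hz1 : z ≠ 1 := by
    intro h
    exact hzne (Subtype.ext h)
  set zc : ↥Z := ⟨z, hzZ⟩ with hzc_def
  have hzc : zc ≠ 1 := by
    intro h
    exact hz1 (congrArg Subtype.val h)
  have helem' : ∀ a : ↥Z, a ^ p = 1 := by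
    intro a
    ext
    push_cast
    exact helem (a : H) a.2
  open scoped IsMulCommutative in
  obtain ⟨T, hTcard, hTgen⟩ := exists_small_gen (p := p) (A := ↥Z) helem' hzc
  obtain ⟨S', hS'card, hS'gen⟩ := Group.rank_spec (H ⧸ Z)
  set f := QuotientGroup.mk' Z with hfdef
  set σ := Function.surjInv (QuotientGroup.mk'_surjective Z) with hσ
  have hfσ : ∀ y, f (σ y) = y := fun y =>
    Function.surjInv_eq (QuotientGroup.mk'_surjective Z) y
  set S : Finset H := S'.image σ with hS
  set U : Finset H := S ∪ T.image Subtype.val with hU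
  set W : Subgroup H := Subgroup.closure (U : Set H) ⊔ Φ with hW
  -- Z is contained in W
  have hZle : Z ≤ W := by
    have hmap : Subgroup.map Z.subtype (Subgroup.closure ((T : Set ↥Z) ∪ {zc})) = Z := by
      rw [hTgen, ← MonoidHom.range_eq_map]
      exact Subgroup.range_subtype Z
    rw [← hmap, MonoidHom.map_closure]
    rw [Subgroup.closure_le]
    rintro _ ⟨y, hy, rfl⟩
    rcases hy with hy | hy
    · have hyT : y ∈ T := hy
      have hmem : (y : H) ∈ U := Finset.mem_union_right _ (Finset.mem_image.mpr ⟨y, hyT, rfl⟩)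
      exact le_sup_left (α := Subgroup H) (a := Subgroup.closure (U : Set H))
        (Subgroup.subset_closure hmem)
    · have : y = zc := hy
      subst this
      exact le_sup_right (α := Subgroup H) (b := Φ) hzΦ
  -- W maps onto the quotient
  have hmapW : Subgroup.map f W = ⊤ := by
    rw [eq_top_iff, ← hS'gen, Subgroup.closure_le]
    intro y hy
    have hyS : y ∈ S' := hy
    have hmem : σ y ∈ U := Finset.mem_union_left _ (Finset.mem_image.mpr ⟨y, hyS, rfl⟩)
    exact Subgroup.mem_map.mpr ⟨σ y,
      le_sup_left (α := Subgroup H) (a := Subgroup.closure (U : Set H)) (b := Φ)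
        (Subgroup.subset_closure hmem), hfσ y⟩
  -- hence W is everything
  have hWtop : W = ⊤ := by
    have hker : f.ker = Z := QuotientGroup.ker_mk' Z
    have h1 := Subgroup.comap_map_eq f W
    rw [hmapW, Subgroup.comap_top, hker, sup_of_le_left hZle] at h1
    exact h1.symm
  -- nongeneration: closure U is everything
  have hUtop : Subgroup.closure (U : Set H) = ⊤ := by
    apply eq_top_of_sup_phi hH
    rw [← hΦ, ← hW, hWtop]
  have hrank := Group.rank_le (G := H) hUtop
  have hUcard : U.card ≤ S'.card + T.card := by
    refine (Finset.card_union_le _ _).trans ?_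
    have h1 : S.card ≤ S'.card := Finset.card_image_le
    have h2 : (T.image Subtype.val).card ≤ T.card := Finset.card_image_le
    omega
  have e1 : Group.rank (Subgroup.center H) = Group.rank ↥Z := rfl
  have e2 : Group.rank (H ⧸ Subgroup.center H) = Group.rank (H ⧸ Z) := rfl
  omega
end
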